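/- Let n ≥ 1, let z : Fin (n+1) → ℝ be arbitrary, and let α : Fin (n+1) → ℝ satisfy 0 ≤ α j < π/2 for every j and (z j, α j) ≠ (z k, α k) whenever j ≠ k. Then for every pair j ≠ k one has sinh((z k − z j) + i(α k − α j)) ≠ 0, and ∑_{j=0}^{n} ∏_{k ≠ j} coth((z k − z j) + i(α k − α j)) = (1 + (−1)^n)/2. -/

import Mathlib

open Real Polynomial Finset

open Polynomial Finset

variable {F : Type*} [Field F] {ι : Type*} [DecidableEq ι]

theorem basis_coeff {s : Finset ι} {v : ι → F} (hvs : Set.InjOn v s) {i : ι} (hi : i ∈ s) :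
    (Lagrange.basis s v i).coeff (#s - 1) = ∏ j ∈ s.erase i, (v i - v j)⁻¹ := by
  have hdeg := Lagrange.degree_basis hvs hi
  have hnd : (Lagrange.basis s v i).natDegree = #s - 1 :=
    natDegree_eq_of_degree_eq_some hdeg
  rw [← hnd, coeff_natDegree, Lagrange.basis, leadingCoeff_prod]
  refine Finset.prod_congr rfl fun j hj => ?_
  have hne : v i ≠ v j := by
    rcases Finset.mem_erase.mp hj with ⟨hji, hjs⟩
    exact fun h => hji (hvs hjs hi h.symm)
  rw [Lagrange.basisDivisor, leadingCoeff_mul, leadingCoeff_C, leadingCoeff_X_sub_C, mul_one]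

theorem coeff_eq_sum {s : Finset ι} {v : ι → F} (hvs : Set.InjOn v s) {f : F[X]}
    (hf : f.degree < #s) :
    f.coeff (#s - 1) = ∑ i ∈ s, f.eval (v i) * ∏ j ∈ s.erase i, (v i - v j)⁻¹ := by
  conv_lhs => rw [Lagrange.eq_interpolate hvs hf]
  rw [Lagrange.interpolate_apply, finset_sum_coeff]
  refine Finset.sum_congr rfl fun i hi => ?_
  rw [coeff_C_mul, basis_coeff hvs hi]

theorem key_identity (m : ℕ) (t : Fin (m + 1) → ℂ) (ht0 : ∀ j, t j ≠ 0)
    (htinj : Function.Injective t) :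
    ∑ j : Fin (m + 1), ∏ k ∈ Finset.univ.erase j, (t k + t j) / (t k - t j)
      = (1 + (-1 : ℂ) ^ m) / 2 := by
  classical
  -- nodes: Option (Fin (m+1)), none ↦ 0
  set v : Option (Fin (m + 1)) → ℂ := fun o => o.elim 0 t with hv
  have hvinj : Function.Injective v := by
    rintro (_|a) (_|b) h
    · rfl
    · exact absurd h.symm (ht0 b)
    · exact absurd h (ht0 a)
    · exact congrArg some (htinj h)
  set f : ℂ[X] := ∏ k : Fin (m + 1), (X + C (t k)) with hfdef
  have hmonic : f.Monic := monic_prod_of_monic _ _ fun k _ => by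
    simpa using monic_X_add_C (t k)
  have hnd : f.natDegree = m + 1 := by
    rw [hfdef, natDegree_prod _ _ (fun k _ => (monic_X_add_C (t k)).ne_zero)]
    simp [natDegree_X_add_C]
  have hcard : #(Finset.univ : Finset (Option (Fin (m + 1)))) = m + 2 := by
    simp [Finset.card_univ]
  have hdeg : f.degree < #(Finset.univ : Finset (Option (Fin (m + 1)))) := by
    rw [hcard, degree_eq_natDegree hmonic.ne_zero, hnd]
    exact_mod_cast Nat.lt_succ_self _
  have hkey := coeff_eq_sum (v := v) (Function.Injective.injOn hvinj) hdeg
  rw [hcard] at hkey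
  have hlhs : f.coeff (m + 2 - 1) = 1 := by
    have : m + 2 - 1 = f.natDegree := by omega
    rw [this, coeff_natDegree]; exact hmonic
  rw [hlhs, Fintype.sum_option] at hkey
  have e1 : (Finset.univ : Finset (Option (Fin (m+1)))).erase none
      = Finset.univ.map Function.Embedding.some := by
    ext o; cases o <;> simp
  have e2 : ∀ i : Fin (m+1), (Finset.univ : Finset (Option (Fin (m+1)))).erase (some i)
      = Finset.insertNone (Finset.univ.erase i) := by
    intro i; ext o; cases o <;> simp [eq_comm]
  have hvn : v none = 0 := rfl
  have hvs : ∀ i, v (some i) = t i := fun i => rfl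
  have hnone : f.eval (v none) * ∏ j ∈ Finset.univ.erase none, (v none - v j)⁻¹
      = (-1 : ℂ) ^ (m + 1) := by
    rw [e1, Finset.prod_map, hvn, hfdef, eval_prod]
    simp only [Function.Embedding.some_apply, hvs, eval_add, eval_X, eval_C, zero_add, zero_sub]
    rw [← Finset.prod_mul_distrib]
    rw [Finset.prod_congr rfl (fun k _ => show t k * (-(t k))⁻¹ = -1 by
      rw [inv_neg, mul_neg, mul_inv_cancel₀ (ht0 k)])]
    simp
  set Q : Fin (m+1) → ℂ := fun i => ∏ k ∈ Finset.univ.erase i, ((t i + t k) * (t i - t k)⁻¹)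
    with hQ
  have hsome : ∀ i, f.eval (v (some i)) * ∏ j ∈ Finset.univ.erase (some i),
      (v (some i) - v j)⁻¹ = 2 * Q i := by
    intro i
    rw [e2 i, Finset.prod_insertNone, hvs, hfdef, eval_prod]
    simp only [hvs, hvn, eval_add, eval_X, eval_C, sub_zero]
    rw [← Finset.mul_prod_erase Finset.univ _ (Finset.mem_univ i), hQ]
    show _ = 2 * ∏ k ∈ Finset.univ.erase i, ((t i + t k) * (t i - t k)⁻¹)
    rw [Finset.prod_mul_distrib]
    set P := ∏ x ∈ Finset.univ.erase i, (t i + t x)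
    set R := ∏ x ∈ Finset.univ.erase i, (t i - t x)⁻¹
    field_simp [ht0 i]
    ring
  rw [hnone, Finset.sum_congr rfl (fun i _ => hsome i), ← Finset.mul_sum] at hkey
  have hterm : ∀ i : Fin (m+1), ∏ k ∈ Finset.univ.erase i, (t k + t i) / (t k - t i)
      = (-1 : ℂ) ^ m * Q i := by
    intro i
    rw [hQ]
    have hc : #(Finset.univ.erase i) = m := by
      rw [Finset.card_erase_of_mem (Finset.mem_univ i)]; simp
    calc ∏ k ∈ Finset.univ.erase i, (t k + t i) / (t k - t i)
        = ∏ k ∈ Finset.univ.erase i, (-((t i + t k) * (t i - t k)⁻¹)) := by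
          refine Finset.prod_congr rfl fun k _ => ?_
          rw [div_eq_mul_inv, add_comm, show t k - t i = -(t i - t k) by ring, inv_neg,
            mul_neg]
      _ = (-1 : ℂ) ^ m * ∏ k ∈ Finset.univ.erase i, ((t i + t k) * (t i - t k)⁻¹) := by
          rw [Finset.prod_congr rfl (fun k _ => (neg_one_mul ((t i + t k) * (t i - t k)⁻¹)).symm),
            Finset.prod_mul_distrib, Finset.prod_const, hc]
  rw [Finset.sum_congr rfl (fun i _ => hterm i), ← Finset.mul_sum]
  have hm1 : ((-1 : ℂ)) ^ m * (-1) ^ m = 1 := by rw [← mul_pow]; norm_num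
  have hpow : ((-1 : ℂ)) ^ (m + 1) = -(-1) ^ m := by rw [pow_succ]; ring
  rw [hpow] at hkey
  linear_combination (-(-1 : ℂ)^m / 2) * hkey + (1/2 : ℂ) * hm1

theorem sum_prod_coth_shifted (n : ℕ) (hn : 1 ≤ n) (z : Fin (n + 1) → ℝ)
    (α : Fin (n + 1) → ℝ) (hα : ∀ j, 0 ≤ α j ∧ α j < π / 2)
    (hne : ∀ j k : Fin (n + 1), j ≠ k → (z j, α j) ≠ (z k, α k)) :
    (∀ j k : Fin (n + 1), j ≠ k →
        Complex.sinh ((↑(z k) - ↑(z j)) + Complex.I * (↑(α k) - ↑(α j))) ≠ 0) ∧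
      ∑ j : Fin (n + 1), ∏ k ∈ Finset.univ.erase j,
          Complex.cosh ((↑(z k) - ↑(z j)) + Complex.I * (↑(α k) - ↑(α j))) /
            Complex.sinh ((↑(z k) - ↑(z j)) + Complex.I * (↑(α k) - ↑(α j)))
        = (1 + (-1 : ℂ) ^ n) / 2 := by
  classical
  set w : Fin (n + 1) → ℂ := fun j => (z j : ℂ) + Complex.I * (α j : ℂ) with hw
  have hargs : ∀ j k : Fin (n + 1),
      ((z k : ℂ) - (z j : ℂ)) + Complex.I * ((α k : ℂ) - (α j : ℂ)) = w k - w j := by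
    intro j k; simp only [hw]; ring
  set t : Fin (n + 1) → ℂ := fun j => Complex.exp (2 * w j) with htdef
  have ht0 : ∀ j, t j ≠ 0 := fun j => Complex.exp_ne_zero _
  have htinj : Function.Injective t := by
    intro j k h
    by_contra hjk
    have h1 : Complex.exp (2 * w j - 2 * w k) = 1 := by
      rw [Complex.exp_sub]
      rw [htdef] at h
      simp only at h
      rw [h, div_self (Complex.exp_ne_zero _)]
    rw [Complex.exp_eq_one_iff] at h1
    obtain ⟨m, hm⟩ := h1
    rw [Complex.ext_iff] at hm
    obtain ⟨hre, him⟩ := hm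
    simp [hw, Complex.mul_re, Complex.mul_im] at hre him
    have hπ := Real.pi_pos
    have h1' : α j - α k = m * π := by linarith
    obtain ⟨haj0, haj1⟩ := hα j
    obtain ⟨hak0, hak1⟩ := hα k
    have h2 : |α j - α k| < π / 2 := abs_lt.mpr ⟨by linarith, by linarith⟩
    have hm0 : m = 0 := by
      by_contra hm0
      have hge : (1 : ℝ) ≤ |(m : ℝ)| := by
        exact_mod_cast Int.one_le_abs hm0
      have : π ≤ |(m : ℝ) * π| := by
        rw [abs_mul, abs_of_pos hπ]; nlinarith
      rw [← h1'] at this; linarith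
    have hα' : α j = α k := by rw [hm0] at h1'; push_cast at h1'; linarith
    have hz' : z j = z k := by linarith
    exact hne j k hjk (by rw [hz', hα'])
  have hsinh : ∀ j k : Fin (n + 1), j ≠ k → Complex.sinh (w k - w j) ≠ 0 := by
    intro j k hjk hzero
    rw [Complex.sinh] at hzero
    have hx : Complex.exp (w k - w j) = Complex.exp (-(w k - w j)) :=
      sub_eq_zero.mp ((div_eq_zero_iff.mp hzero).resolve_right two_ne_zero)
    have heq : t k = t j := by
      have e1 : (2 : ℂ) * w k = (w k - w j) + (w k + w j) := by ring
      have e2 : (2 : ℂ) * w j = (-(w k - w j)) + (w k + w j) := by ring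
      have e3 : Complex.exp ((w k - w j) + (w k + w j))
          = Complex.exp ((-(w k - w j)) + (w k + w j)) := by
        rw [Complex.exp_add (w k - w j) (w k + w j),
          Complex.exp_add (-(w k - w j)) (w k + w j), hx]
      rw [htdef]
      simp only
      rw [e1, e2]
      exact e3
    exact hjk (htinj heq).symm
  have hcoth : ∀ j k : Fin (n + 1), j ≠ k →
      Complex.cosh (w k - w j) / Complex.sinh (w k - w j) = (t k + t j) / (t k - t j) := by
    intro j k hjk
    have hne' : t k ≠ t j := fun h => hjk (htinj h).symm
    set a := Complex.exp (w j) with ha'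
    set b := Complex.exp (w k) with hb'
    have ha : a ≠ 0 := Complex.exp_ne_zero _
    have hb : b ≠ 0 := Complex.exp_ne_zero _
    have hek : Complex.exp (w k - w j) = b / a := Complex.exp_sub _ _
    have hek' : Complex.exp (-(w k - w j)) = a / b := by rw [neg_sub, Complex.exp_sub]
    have htk : t k = b * b := by
      rw [htdef]; simp only; rw [two_mul, Complex.exp_add]
    have htj : t j = a * a := by
      rw [htdef]; simp only; rw [two_mul, Complex.exp_add]
    have hab : b * b - a * a ≠ 0 := by
      rw [← htk, ← htj]; exact sub_ne_zero.mpr hne'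
    have hd : b / a - a / b = (b * b - a * a) / (a * b) := by
      field_simp
    have hden : (b / a - a / b) / 2 ≠ 0 := by
      have h1 : b / a - a / b ≠ 0 := by
        rw [hd]; exact div_ne_zero hab (mul_ne_zero ha hb)
      exact div_ne_zero h1 two_ne_zero
    have key : (Complex.exp (w k - w j) + Complex.exp (-(w k - w j))) / 2
        = (b * b + a * a) / (b * b - a * a)
          * ((Complex.exp (w k - w j) - Complex.exp (-(w k - w j))) / 2) := by
      rw [hek, hek']
      field_simp
      exact (mul_div_cancel_right₀ _ (by rw [pow_two, pow_two]; exact hab)).symm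
    rw [Complex.sinh, Complex.cosh, key, hek, hek', htk, htj, mul_div_assoc,
      div_self hden, mul_one]
  constructor
  · intro j k hjk
    rw [hargs j k]
    exact hsinh j k hjk
  · rw [Finset.sum_congr rfl fun j _ => Finset.prod_congr rfl fun k hk => by
      rw [hargs j k, hcoth j k (Finset.mem_erase.mp hk).1.symm]]
    exact key_identity n t ht0 htinj
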